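/- For every N ∈ ℕ, the coherent spin states resolve the identity on the symmetric subspace: ((N+1)/(4π)) ∫_{S²} |Ω⟩⟨Ω|_N dΩ equals the identity operator on Sym^N(ℂ²). -/

import Mathlib

open scoped ComplexConjugate
open MeasureTheory Filter Topology

noncomputable section

/-! ## Setting

`M₂(ℂ)^{⊗N}` is realized as matrices indexed by `Fin N → Fin 2`, acting on
`(ℂ²)^{⊗N} = EuclideanSpace ℂ (Fin N → Fin 2)`. -/

/-- `M₂(ℂ)^{⊗N}`, realized as matrices indexed by `Fin N → Fin 2`. -/
abbrev TP (N : ℕ) : Type := Matrix (Fin N → Fin 2) (Fin N → Fin 2) ℂ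

/-- The Pauli matrices `σ₁, σ₂, σ₃`. -/
def pauli : Fin 3 → Matrix (Fin 2) (Fin 2) ℂ
  | 0 => !![0, 1; 1, 0]
  | 1 => !![0, -Complex.I; Complex.I, 0]
  | 2 => !![1, 0; 0, -1]

/-- The symmetrization operator `S_N` on `M₂(ℂ)^{⊗N}`: the average over all permutations
of the tensor factors. -/
def symmMat (N : ℕ) (A : TP N) : TP N :=
  (N.factorial : ℂ)⁻¹ • ∑ σ : Equiv.Perm (Fin N), Matrix.of fun i j => A (i ∘ σ) (j ∘ σ)

/-- `b ⊗ I₂^{⊗(N−M)}` (junk value `0` if `M > N`). -/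
def embedMat (M N : ℕ) (b : TP M) : TP N :=
  if h : M ≤ N then
    Matrix.of fun i j =>
      b (fun k => i (Fin.castLE h k)) (fun k => j (Fin.castLE h k)) *
        ∏ k ∈ Finset.univ.filter (fun k : Fin N => M ≤ (k : ℕ)),
          (if i k = j k then (1 : ℂ) else 0)
  else 0

/-- `S_{M,N}(b) = S_N(b ⊗ I₂^{⊗(N−M)})`. -/
def SMN (M N : ℕ) (b : TP M) : TP N := symmMat N (embedMat M N b)

/-- The elementary tensor `σ_{m 0} ⊗ ⋯ ⊗ σ_{m (L-1)}` as a matrix on `(ℂ²)^{⊗L}`. -/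
def pauliTensor {L : ℕ} (m : Fin L → Fin 3) : TP L :=
  Matrix.of fun i j => ∏ k, pauli (m k) (i k) (j k)

/-- For a monomial with exponents `d`, the list of its variable indices (first `d 0` copies
of `0`, then `d 1` copies of `1`, then `d 2` copies of `2`). -/
def monFun (d : Fin 3 →₀ ℕ) : Fin (d 0 + d 1 + d 2) → Fin 3 := fun k =>
  if (k : ℕ) < d 0 then 0 else if (k : ℕ) < d 0 + d 1 then 1 else 2

/-- Quantization of the monomial `x^{d 0} y^{d 1} z^{d 2}`:
`S_{L,N}(σ_{j₁} ⊗ ⋯ ⊗ σ_{j_L})` if `L ≤ N`, and `0` if `L > N`. -/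
def Qmon (N : ℕ) (d : Fin 3 →₀ ℕ) : TP N :=
  SMN (d 0 + d 1 + d 2) N (pauliTensor (monFun d))

/-- The quantization map `Q_{1/N}`: the linear extension of `Qmon` to all complex
polynomials in the three real variables `x, y, z`. -/
def Q (N : ℕ) (p : MvPolynomial (Fin 3) ℂ) : TP N :=
  ∑ d ∈ p.support, p.coeff d • Qmon N d

/-- The symmetric subspace `Sym^N(ℂ²) ⊆ (ℂ²)^{⊗N}` (the fixed points of the permutation
action, i.e. the range of the vector symmetrizer). -/
def SymSub (N : ℕ) : Submodule ℂ (EuclideanSpace ℂ (Fin N → Fin 2)) where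
  carrier := {v | ∀ σ : Equiv.Perm (Fin N), ∀ i, v (i ∘ σ) = v i}
  add_mem' := by
    intro a b ha hb σ i
    have : (a + b) (i ∘ σ) = a (i ∘ σ) + b (i ∘ σ) := rfl
    rw [this, ha σ i, hb σ i]; rfl
  zero_mem' := by intro σ i; rfl
  smul_mem' := by
    intro c v hv σ i
    have : (c • v) (i ∘ σ) = c • (v (i ∘ σ)) := rfl
    rw [this, hv σ i]; rfl

/-- The vector symmetrizer. -/
def symVec (N : ℕ) (v : EuclideanSpace ℂ (Fin N → Fin 2)) :
    EuclideanSpace ℂ (Fin N → Fin 2) :=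
  WithLp.toLp 2 fun i => (N.factorial : ℂ)⁻¹ * ∑ σ : Equiv.Perm (Fin N), v (i ∘ σ)

lemma symVec_mem (N : ℕ) (v : EuclideanSpace ℂ (Fin N → Fin 2)) :
    symVec N v ∈ SymSub N := by
  intro τ i
  show (N.factorial : ℂ)⁻¹ * ∑ σ : Equiv.Perm (Fin N), v ((i ∘ τ) ∘ σ)
      = (N.factorial : ℂ)⁻¹ * ∑ σ : Equiv.Perm (Fin N), v (i ∘ σ)
  congr 1
  exact Fintype.sum_equiv (Equiv.mulLeft τ) _ _ (fun σ => by rfl)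

/-- The vector symmetrizer as a linear map onto the symmetric subspace. -/
def symProj (N : ℕ) : EuclideanSpace ℂ (Fin N → Fin 2) →ₗ[ℂ] SymSub N where
  toFun v := ⟨symVec N v, symVec_mem N v⟩
  map_add' v w := by
    apply Subtype.ext
    apply WithLp.ofLp_injective
    funext i
    show (N.factorial : ℂ)⁻¹ * ∑ σ : Equiv.Perm (Fin N), (v + w) (i ∘ σ) = _
    have h : ∀ σ : Equiv.Perm (Fin N), (v + w) (i ∘ σ) = v (i ∘ σ) + w (i ∘ σ) :=
      fun _ => rfl
    simp only [h, Finset.sum_add_distrib]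
    show _ = (N.factorial : ℂ)⁻¹ * (∑ σ : Equiv.Perm (Fin N), v (i ∘ σ))
        + (N.factorial : ℂ)⁻¹ * (∑ σ : Equiv.Perm (Fin N), w (i ∘ σ))
    ring
  map_smul' c v := by
    apply Subtype.ext
    apply WithLp.ofLp_injective
    funext i
    show (N.factorial : ℂ)⁻¹ * ∑ σ : Equiv.Perm (Fin N), (c • v) (i ∘ σ) = _
    have h : ∀ σ : Equiv.Perm (Fin N), (c • v) (i ∘ σ) = c * v (i ∘ σ) := fun _ => rfl
    simp only [h, ← Finset.mul_sum]
    show _ = c * ((N.factorial : ℂ)⁻¹ * (∑ σ : Equiv.Perm (Fin N), v (i ∘ σ)))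
    ring

/-- The restriction (compression) of a matrix `A` on `(ℂ²)^{⊗N}` to the symmetric subspace
`Sym^N(ℂ²)`, as a continuous linear operator; when `A` leaves `Sym^N(ℂ²)` invariant (as do
all operators considered here) this is exactly the restriction `A|_{Sym^N(ℂ²)}`. -/
def restrSym (N : ℕ) (A : TP N) : SymSub N →L[ℂ] SymSub N :=
  LinearMap.toContinuousLinearMap
    ((symProj N) ∘ₗ (Matrix.toEuclideanLin A) ∘ₗ (SymSub N).subtype)

/-- The unit sphere `S² ⊂ ℝ³`. -/
abbrev S2 : Type := Metric.sphere (0 : EuclideanSpace ℝ (Fin 3)) 1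

/-- Spherical coordinates `(θ, φ) ↦ (sin θ cos φ, sin θ sin φ, cos θ)`. -/
def sphCoord (a : ℝ × ℝ) : EuclideanSpace ℝ (Fin 3) :=
  WithLp.toLp 2 ![Real.sin a.1 * Real.cos a.2, Real.sin a.1 * Real.sin a.2, Real.cos a.1]

lemma sphCoord_mem (a : ℝ × ℝ) :
    sphCoord a ∈ Metric.sphere (0 : EuclideanSpace ℝ (Fin 3)) 1 := by
  have h : ‖sphCoord a‖ = 1 := by
    rw [EuclideanSpace.norm_eq]
    have : ∑ i : Fin 3, sphCoord a i ^ 2 = 1 := by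
      have hs := Real.sin_sq_add_cos_sq a.1
      have hc := Real.sin_sq_add_cos_sq a.2
      simp [sphCoord, Fin.sum_univ_three]
      nlinarith [hs, hc]
    have h2 : ∀ i : Fin 3, ‖sphCoord a i‖ ^ 2 = sphCoord a i ^ 2 := fun i => sq_abs _
    simp only [h2, this]
    exact Real.sqrt_one
  simpa [mem_sphere_iff_norm] using h

/-- The standard surface measure `dΩ` on `S²` (of total mass `4π`), realized as the
push-forward of `sin θ dθ dφ` on `[0,π] × (−π,π]` under spherical coordinates. -/
def μS2 : Measure S2 :=
  Measure.map (fun a : ℝ × ℝ => (⟨sphCoord a, sphCoord_mem a⟩ : S2))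
    (((volume : Measure (ℝ × ℝ)).restrict
        (Set.Icc (0 : ℝ) Real.pi ×ˢ Set.Ioc (-Real.pi) Real.pi)).withDensity
      fun a => ENNReal.ofReal (Real.sin a.1))

/-- The polar angle `θ ∈ [0, π]` of a point of `S²`. -/
def thetaOf (Ω : S2) : ℝ := Real.arccos ((Ω : EuclideanSpace ℝ (Fin 3)) 2)

/-- The azimuthal angle `φ ∈ (−π, π]` of a point of `S²`. -/
def phiOf (Ω : S2) : ℝ :=
  Complex.arg (((Ω : EuclideanSpace ℝ (Fin 3)) 0 : ℂ) +
    ((Ω : EuclideanSpace ℝ (Fin 3)) 1 : ℂ) * Complex.I)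

/-- The coherent spin state `|Ω⟩₁ = cos(θ/2) e₁ + e^{iφ} sin(θ/2) e₂ ∈ ℂ²`. -/
def cs1 (Ω : S2) : Fin 2 → ℂ :=
  ![(Real.cos (thetaOf Ω / 2) : ℂ),
    Complex.exp (Complex.I * (phiOf Ω : ℂ)) * (Real.sin (thetaOf Ω / 2) : ℂ)]

/-- The `N`-fold coherent spin state `|Ω⟩_N = |Ω⟩₁^{⊗N} ∈ (ℂ²)^{⊗N}`. -/
def csN (N : ℕ) (Ω : S2) : EuclideanSpace ℂ (Fin N → Fin 2) :=
  WithLp.toLp 2 fun i => ∏ k, cs1 Ω (i k)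

/-- The matrix of the weak integral `((N+1)/(4π)) ∫_{S²} f(Ω) |Ω⟩⟨Ω|_N dΩ` on `(ℂ²)^{⊗N}`
(entrywise Bochner integral, which in finite dimension coincides with the weak integral). -/
def Q'mat (N : ℕ) (f : S2 → ℂ) : TP N :=
  Matrix.of fun i j =>
    ((N + 1 : ℂ) / (4 * (Real.pi : ℂ))) * ∫ Ω, f Ω * csN N Ω i * conj (csN N Ω j) ∂μS2

/-- The coherent-state (Berezin) quantization map `Q'_{1/N}`, as an operator on
`Sym^N(ℂ²)` (the range of `|Ω⟩⟨Ω|_N` lies in `Sym^N(ℂ²)`, so the compression coincides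
with the operator defined by the weak integral). -/
def Q' (N : ℕ) (f : S2 → ℂ) : SymSub N →L[ℂ] SymSub N := restrSym N (Q'mat N f)

/-- The restriction of a polynomial (in three real variables) to the unit sphere `S²`. -/
def restrictS2 (p : MvPolynomial (Fin 3) ℂ) : S2 → ℂ :=
  fun Ω => MvPolynomial.eval (fun i => ((Ω : EuclideanSpace ℝ (Fin 3)) i : ℂ)) p

/-- The restriction to `S²` as a linear map. -/
def restrictS2Lin : MvPolynomial (Fin 3) ℂ →ₗ[ℂ] (S2 → ℂ) where
  toFun := restrictS2
  map_add' p q := by funext Ω; simp [restrictS2]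
  map_smul' c p := by funext Ω; simp [restrictS2]

/-- `P_N(S²)`: the space of restrictions to `S²` of complex polynomials of degree `≤ N`
in three real variables. -/
def PNS2 (N : ℕ) : Submodule ℂ (S2 → ℂ) where
  carrier := {g | ∃ p : MvPolynomial (Fin 3) ℂ, p.totalDegree ≤ N ∧ g = restrictS2 p}
  add_mem' := by
    rintro a b ⟨p, hp, rfl⟩ ⟨q, hq, rfl⟩
    exact ⟨p + q, le_trans (MvPolynomial.totalDegree_add p q) (by omega),
      by funext Ω; simp [restrictS2]⟩
  zero_mem' := ⟨0, by simp, by funext Ω; simp [restrictS2]⟩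
  smul_mem' := by
    rintro c a ⟨p, hp, rfl⟩
    exact ⟨c • p, le_trans (MvPolynomial.totalDegree_smul_le c p) hp,
      by funext Ω; simp [restrictS2]⟩

/-- The `N`-fold tensor power `U^{⊗N}` of a `2×2` matrix, on `(ℂ²)^{⊗N}`. -/
def tpow (N : ℕ) (U : Matrix (Fin 2) (Fin 2) ℂ) : TP N :=
  Matrix.of fun i j => ∏ k, U (i k) (j k)

/-- `σ_k(j) = I₂ ⊗ ⋯ ⊗ σ_k ⊗ ⋯ ⊗ I₂` with the Pauli matrix `σ_k` in the `j`-th slot. -/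
def pauliAt (N : ℕ) (k : Fin 3) (j : Fin N) : TP N :=
  Matrix.of fun a b =>
    pauli k (a j) (b j) *
      ∏ t ∈ Finset.univ.filter (fun t : Fin N => t ≠ j), (if a t = b t then (1 : ℂ) else 0)

/-- The quantum Curie–Weiss Hamiltonian
`h^{CW}_{1/N} = (1/N)( −(J/(2N)) Σ_{i,j} σ₃(i)σ₃(j) − B Σ_j σ₁(j))`. -/
def hCW (J B : ℝ) (N : ℕ) : TP N :=
  ((N : ℂ))⁻¹ • ((-(J / (2 * N)) : ℂ) • ∑ i : Fin N, ∑ j : Fin N,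
      pauliAt N 2 i * pauliAt N 2 j
    + (-(B : ℂ)) • ∑ j : Fin N, pauliAt N 0 j)

open scoped Classical in
/-- The action of a (special orthogonal) matrix on the unit sphere `S²`
(junk value if the image does not lie on the sphere). -/
def rotAct (R : Matrix (Fin 3) (Fin 3) ℝ) (Ω : S2) : S2 :=
  if h : (WithLp.toLp 2 (R.mulVec (Ω : EuclideanSpace ℝ (Fin 3))) : EuclideanSpace ℝ (Fin 3)) ∈
      Metric.sphere (0 : EuclideanSpace ℝ (Fin 3)) 1
  then ⟨WithLp.toLp 2 (R.mulVec (Ω : EuclideanSpace ℝ (Fin 3))), h⟩ else Ω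

/-- A polynomial in three variables is harmonic if its Laplacian vanishes. -/
def IsHarmonic (p : MvPolynomial (Fin 3) ℂ) : Prop :=
  ∑ i : Fin 3, MvPolynomial.pderiv i (MvPolynomial.pderiv i p) = 0

/-- The polynomial `x² + y² + z² − 1`. -/
def sphPoly : MvPolynomial (Fin 3) ℂ :=
  MvPolynomial.X 0 ^ 2 + MvPolynomial.X 1 ^ 2 + MvPolynomial.X 2 ^ 2 - 1

/-- The Dicke state `|k, N−k⟩ ∈ Sym^N(ℂ²)`: `binom(N,k)^{-1/2}` times the sum of all
elementary tensors with exactly `k` factors `e₂` (and `N−k` factors `e₁`). -/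
def dicke (N k : ℕ) : EuclideanSpace ℂ (Fin N → Fin 2) :=
  WithLp.toLp 2 fun i => if (Finset.univ.filter fun t => i t = 1).card = k
    then ((Real.sqrt (N.choose k) : ℂ))⁻¹ else 0

/-- The operator norm of a matrix acting on `(ℂ²)^{⊗N}` with its Euclidean (ℓ²) norm. -/
def matOpNorm {N : ℕ} (A : TP N) : ℝ :=
  ‖LinearMap.toContinuousLinearMap (Matrix.toEuclideanLin A)‖


/-! ### Auxiliary lemmas -/

open intervalIntegral in
lemma beta_nat' : ∀ (m p : ℕ), ∫ x in (0:ℝ)..1, x^p * (1-x)^m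
    = (p.factorial * m.factorial : ℝ) / ((p+m+1).factorial) := by
  intro m
  induction m with
  | zero =>
    intro p
    simp only [pow_zero, mul_one, integral_pow, one_pow, Nat.factorial_succ,
      Nat.factorial_one, Nat.cast_mul]
    rw [zero_pow (Nat.succ_ne_zero p)]
    rw [div_eq_div_iff (by positivity) (by positivity)]
    simp [Nat.factorial_zero]; ring
  | succ m ih =>
    intro p
    have hu : ∀ x ∈ Set.uIcc (0:ℝ) 1, HasDerivAt (fun x : ℝ => (1-x)^(m+1))
        (-((m:ℝ)+1) * (1-x)^m) x := by
      intro x _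
      have h1 : HasDerivAt (fun x : ℝ => 1 - x) (-1) x := (hasDerivAt_id x).const_sub 1
      have := h1.pow (m+1)
      refine this.congr_deriv ?_
      simp only [Nat.add_sub_cancel]
      push_cast; ring
    have hv : ∀ x ∈ Set.uIcc (0:ℝ) 1, HasDerivAt (fun x : ℝ => x^(p+1)/((p:ℝ)+1))
        (x^p) x := by
      intro x _
      have := (hasDerivAt_pow (p+1) x).div_const ((p:ℝ)+1)
      refine this.congr_deriv ?_
      have : ((p:ℝ)+1) ≠ 0 := by positivity
      simp only [Nat.add_sub_cancel]
      push_cast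
      field_simp
    have hiu : IntervalIntegrable (fun x : ℝ => -((m:ℝ)+1) * (1-x)^m) volume 0 1 :=
      (Continuous.intervalIntegrable (by fun_prop) _ _)
    have hiv : IntervalIntegrable (fun x : ℝ => x^p) volume 0 1 :=
      (Continuous.intervalIntegrable (by fun_prop) _ _)
    have key := intervalIntegral.integral_mul_deriv_eq_deriv_mul hu hv hiu hiv
    have comm : (∫ x in (0:ℝ)..1, x ^ p * (1-x)^(m+1))
        = ∫ x in (0:ℝ)..1, (1-x)^(m+1) * x ^ p := by
      congr 1; funext x; ring
    simp only [zero_pow (Nat.succ_ne_zero p), zero_div, mul_zero, sub_zero, zero_sub] at key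
    rw [comm, key]
    have : (∫ x in (0:ℝ)..1, -((m:ℝ)+1) * (1-x)^m * (x^(p+1)/((p:ℝ)+1)))
        = (-((m:ℝ)+1)/((p:ℝ)+1)) * ∫ x in (0:ℝ)..1, x^(p+1) * (1-x)^m := by
      rw [← intervalIntegral.integral_const_mul]
      congr 1; funext x; ring
    rw [this, ih (p+1)]
    have h1 : ((p:ℝ)+1) ≠ 0 := by positivity
    have e2 : (p+1+m+1) = (p+(m+1)+1) := by ring
    rw [e2, Nat.factorial_succ p, Nat.factorial_succ m]
    have h3 : (0:ℝ) < ((p+(m+1)+1).factorial : ℝ) := by positivity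
    rw [sub_self, zero_pow (Nat.succ_ne_zero m), zero_mul, zero_sub]
    push_cast
    field_simp

/-- weight of a multi-index -/
def wt {N : ℕ} (i : Fin N → Fin 2) : ℕ := (Finset.univ.filter fun t => i t = 1).card

lemma wt_le {N : ℕ} (i : Fin N → Fin 2) : wt i ≤ N :=
  (Finset.card_filter_le _ _).trans_eq (by simp)

lemma fin2_eq_zero_of_ne_one {x : Fin 2} (h : x ≠ 1) : x = 0 := by omega

lemma perm_exists {N : ℕ} {i j : Fin N → Fin 2} (h : wt i = wt j) :
    ∃ σ : Equiv.Perm (Fin N), j = i ∘ σ := by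
  classical
  have hcard : Fintype.card {t // j t = 1} = Fintype.card {t // i t = 1} := by
    rw [Fintype.card_subtype, Fintype.card_subtype]
    exact h.symm
  have hki : (Finset.univ.filter fun t => i t = 1).card
      + (Finset.univ.filter fun t => ¬ i t = 1).card = N := by
    rw [Finset.card_filter_add_card_filter_not]; simp
  have hkj : (Finset.univ.filter fun t => j t = 1).card
      + (Finset.univ.filter fun t => ¬ j t = 1).card = N := by
    rw [Finset.card_filter_add_card_filter_not]; simp
  have hcard' : Fintype.card {t // ¬ j t = 1} = Fintype.card {t // ¬ i t = 1} := by
    rw [Fintype.card_subtype, Fintype.card_subtype]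
    have := h
    unfold wt at this
    omega
  let e : {t // j t = 1} ≃ {t // i t = 1} := Fintype.equivOfCardEq hcard
  let e' : {t // ¬ j t = 1} ≃ {t // ¬ i t = 1} := Fintype.equivOfCardEq hcard'
  refine ⟨(Equiv.sumCompl fun t => j t = 1).symm.trans
    ((e.sumCongr e').trans (Equiv.sumCompl fun t => i t = 1)), ?_⟩
  funext t
  by_cases ht : j t = 1
  · have h1 : (Equiv.sumCompl fun t => j t = 1).symm t = Sum.inl ⟨t, ht⟩ :=
      Equiv.sumCompl_symm_apply_of_pos (p := fun t => j t = 1) (a := t) ht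
    simp only [Function.comp_apply, Equiv.trans_apply, h1, Equiv.sumCongr_apply,
      Sum.map_inl, Equiv.sumCompl_apply_inl]
    rw [ht, (e ⟨t, ht⟩).2]
  · have h1 : (Equiv.sumCompl fun t => j t = 1).symm t = Sum.inr ⟨t, ht⟩ :=
      Equiv.sumCompl_symm_apply_of_neg (p := fun t => j t = 1) (a := t) ht
    simp only [Function.comp_apply, Equiv.trans_apply, h1, Equiv.sumCongr_apply,
      Sum.map_inr, Equiv.sumCompl_apply_inr]
    rw [fin2_eq_zero_of_ne_one ht, fin2_eq_zero_of_ne_one (e' ⟨t, ht⟩).2]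

lemma sym_const {N : ℕ} {v : EuclideanSpace ℂ (Fin N → Fin 2)} (hv : v ∈ SymSub N)
    {i j : Fin N → Fin 2} (h : wt i = wt j) : v j = v i := by
  obtain ⟨σ, rfl⟩ := perm_exists h
  exact hv σ i

lemma wt_card (N p : ℕ) :
    (Finset.univ.filter fun j : Fin N → Fin 2 => wt j = p).card = N.choose p := by
  classical
  rw [show N.choose p = ((Finset.univ : Finset (Fin N)).powersetCard p).card by
    rw [Finset.card_powersetCard]; simp]
  refine Finset.card_bij' (fun j _ => Finset.univ.filter fun t => j t = 1)
    (fun s _ => fun t => if t ∈ s then 1 else 0) ?_ ?_ ?_ ?_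
  · intro j hj
    simp only [Finset.mem_filter, Finset.mem_univ, true_and] at hj
    rw [Finset.mem_powersetCard]
    exact ⟨Finset.subset_univ _, hj⟩
  · intro s hs
    rw [Finset.mem_powersetCard] at hs
    simp only [Finset.mem_filter, Finset.mem_univ, true_and]
    rw [← hs.2]
    unfold wt
    congr 1
    ext t
    simp only [Finset.mem_filter, Finset.mem_univ, true_and]
    split_ifs with h
    · exact iff_of_true rfl h
    · exact iff_of_false (by decide) h
  · intro j hj
    funext t
    by_cases h : j t = 1
    · simp [h]
    · simp only [Finset.mem_filter, Finset.mem_univ, true_and, h, if_false]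
      exact (fin2_eq_zero_of_ne_one h).symm
  · intro s hs
    ext t
    simp only [Finset.mem_filter, Finset.mem_univ, true_and]
    split_ifs with h
    · exact iff_of_true rfl h
    · exact iff_of_false (by decide) h


lemma theta_sph {a : ℝ × ℝ} (h1 : a.1 ∈ Set.Icc 0 Real.pi) :
    thetaOf ⟨sphCoord a, sphCoord_mem a⟩ = a.1 := by
  unfold thetaOf
  have h : ((⟨sphCoord a, sphCoord_mem a⟩ : S2) : EuclideanSpace ℝ (Fin 3)) 2
      = Real.cos a.1 := by
    show sphCoord a 2 = _
    simp [sphCoord]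
  rw [h]
  exact Real.arccos_cos h1.1 h1.2

lemma phi_sph {a : ℝ × ℝ} (h1 : a.1 ∈ Set.Ioo 0 Real.pi)
    (h2 : a.2 ∈ Set.Ioc (-Real.pi) Real.pi) :
    phiOf ⟨sphCoord a, sphCoord_mem a⟩ = a.2 := by
  unfold phiOf
  have h0 : ((⟨sphCoord a, sphCoord_mem a⟩ : S2) : EuclideanSpace ℝ (Fin 3)) 0
      = Real.sin a.1 * Real.cos a.2 := by
    show sphCoord a 0 = _; simp [sphCoord]
  have hh1 : ((⟨sphCoord a, sphCoord_mem a⟩ : S2) : EuclideanSpace ℝ (Fin 3)) 1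
      = Real.sin a.1 * Real.sin a.2 := by
    show sphCoord a 1 = _; simp [sphCoord]
  rw [h0, hh1]
  rw [show ((Real.sin a.1 * Real.cos a.2 : ℝ) : ℂ)
      + ((Real.sin a.1 * Real.sin a.2 : ℝ) : ℂ) * Complex.I
      = ((Real.sin a.1 : ℝ) : ℂ) * (Complex.cos (a.2 : ℂ) + Complex.sin (a.2 : ℂ) * Complex.I) by
    push_cast [← Complex.ofReal_cos, ← Complex.ofReal_sin]
    ring]
  exact Complex.arg_mul_cos_add_sin_mul_I (Real.sin_pos_of_pos_of_lt_pi h1.1 h1.2) h2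

lemma csN_eval (N : ℕ) (Ω : S2) (i : Fin N → Fin 2) :
    csN N Ω i = Complex.exp (Complex.I * (phiOf Ω : ℂ)) ^ (wt i)
      * ((Real.sin (thetaOf Ω / 2) : ℝ) : ℂ) ^ (wt i)
      * ((Real.cos (thetaOf Ω / 2) : ℝ) : ℂ) ^ (N - wt i) := by
  classical
  unfold csN
  show ∏ k, cs1 Ω (i k) = _
  rw [← Finset.prod_filter_mul_prod_filter_not Finset.univ (fun k => i k = 1)]
  have e1 : ∀ k ∈ Finset.univ.filter (fun k => i k = 1), cs1 Ω (i k)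
      = Complex.exp (Complex.I * (phiOf Ω : ℂ)) * ((Real.sin (thetaOf Ω / 2) : ℝ) : ℂ) := by
    intro k hk
    simp only [Finset.mem_filter] at hk
    rw [hk.2]
    simp [cs1]
  have e2 : ∀ k ∈ Finset.univ.filter (fun k => ¬ i k = 1), cs1 Ω (i k)
      = ((Real.cos (thetaOf Ω / 2) : ℝ) : ℂ) := by
    intro k hk
    simp only [Finset.mem_filter] at hk
    rw [fin2_eq_zero_of_ne_one hk.2]
    simp [cs1]
  rw [Finset.prod_congr rfl e1, Finset.prod_congr rfl e2, Finset.prod_const, Finset.prod_const]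
  have hcard : (Finset.univ.filter (fun k => ¬ i k = 1)).card = N - wt i := by
    have h := Finset.card_filter_add_card_filter_not
      (s := (Finset.univ : Finset (Fin N))) (p := fun k => i k = 1)
    simp only [Finset.card_univ, Fintype.card_fin] at h
    have : wt i = (Finset.univ.filter (fun k => i k = 1)).card := rfl
    omega
  rw [hcard]
  have : (Finset.univ.filter (fun k => i k = 1)).card = wt i := rfl
  rw [this, mul_pow]

lemma meas_theta : Measurable thetaOf := by
  unfold thetaOf
  exact Real.continuous_arccos.measurable.comp
    ((measurable_pi_apply (2 : Fin 3)).comp ((PiLp.continuous_ofLp 2 _).measurable.comp measurable_subtype_coe))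

lemma meas_phi : Measurable phiOf := by
  unfold phiOf
  apply Complex.measurable_arg.comp
  apply Measurable.add
  · exact Complex.measurable_ofReal.comp
      ((measurable_pi_apply (0 : Fin 3)).comp ((PiLp.continuous_ofLp 2 _).measurable.comp measurable_subtype_coe))
  · exact (Complex.measurable_ofReal.comp
      ((measurable_pi_apply (1 : Fin 3)).comp ((PiLp.continuous_ofLp 2 _).measurable.comp measurable_subtype_coe))).mul_const Complex.I

lemma meas_csN (N : ℕ) (i : Fin N → Fin 2) : Measurable fun Ω : S2 => csN N Ω i := by
  have heval : (fun Ω : S2 => csN N Ω i) = fun Ω : S2 =>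
      Complex.exp (Complex.I * (phiOf Ω : ℂ)) ^ (wt i)
      * ((Real.sin (thetaOf Ω / 2) : ℝ) : ℂ) ^ (wt i)
      * ((Real.cos (thetaOf Ω / 2) : ℝ) : ℂ) ^ (N - wt i) := by
    funext Ω; exact csN_eval N Ω i
  rw [heval]
  have hth : Measurable fun Ω : S2 => thetaOf Ω / 2 := meas_theta.div_const 2
  have h1 : Measurable fun Ω : S2 => Complex.exp (Complex.I * (phiOf Ω : ℂ)) :=
    Complex.measurable_exp.comp ((Complex.measurable_ofReal.comp meas_phi).const_mul Complex.I)
  have h2 : Measurable fun Ω : S2 => ((Real.sin (thetaOf Ω / 2) : ℝ) : ℂ) :=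
    Complex.measurable_ofReal.comp (Real.continuous_sin.measurable.comp hth)
  have h3 : Measurable fun Ω : S2 => ((Real.cos (thetaOf Ω / 2) : ℝ) : ℂ) :=
    Complex.measurable_ofReal.comp (Real.continuous_cos.measurable.comp hth)
  exact ((h1.pow_const _).mul (h2.pow_const _)).mul (h3.pow_const _)


open Real intervalIntegral in
lemma phi_int (n : ℤ) :
    ∫ φ in (-(π:ℝ))..π, Complex.exp ((n:ℂ) * Complex.I * φ)
      = if n = 0 then (2*π : ℂ) else 0 := by
  by_cases h : n = 0
  · simp [h, two_mul]
  · rw [if_neg h]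
    have hc : ((n:ℂ) * Complex.I) ≠ 0 := by
      simp [Complex.I_ne_zero, h]
    have := integral_exp_mul_complex hc (a := (-(π:ℝ))) (b := π)
    have he : ∀ x : ℝ, (n:ℂ) * Complex.I * x = (n:ℂ)*Complex.I*(x:ℂ) := fun x => rfl
    rw [show (fun x : ℝ => Complex.exp ((n:ℂ) * Complex.I * x)) = fun x : ℝ => Complex.exp ((n:ℂ)*Complex.I*(x:ℂ)) from rfl] at this
    rw [this]
    have key : Complex.exp ((n:ℂ) * Complex.I * (π:ℂ)) = Complex.exp ((n:ℂ) * Complex.I * ((-π:ℝ):ℂ)) := by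
      rw [show ((n:ℂ) * Complex.I * (π:ℂ)) = (n:ℂ) * Complex.I * ((-π:ℝ):ℂ) + (n:ℤ) * (2*π*Complex.I) by push_cast; ring]
      rw [Complex.exp_add, Complex.exp_int_mul_two_pi_mul_I]
      ring
    rw [key]
    simp

open Real intervalIntegral in
lemma theta_int (p m : ℕ) :
    ∫ θ in (0:ℝ)..π, Real.sin θ * (Real.cos (θ/2)^(2*m) * Real.sin (θ/2)^(2*p))
      = 2 * ((p.factorial * m.factorial : ℝ) / ((p+m+1).factorial)) := by
  have hg : ∀ θ : ℝ, Real.sin θ * (Real.cos (θ/2)^(2*m) * Real.sin (θ/2)^(2*p))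
      = (fun u => 2 * (Real.sin u ^ (2*p+1) * Real.cos u ^ (2*m+1))) (θ/2) := by
    intro θ
    have : Real.sin θ = 2 * Real.sin (θ/2) * Real.cos (θ/2) := by
      rw [← Real.sin_two_mul]; congr 1; ring
    simp only [this]; ring
  simp only [hg]
  rw [intervalIntegral.integral_comp_div (f := fun u => 2 * (Real.sin u ^ (2*p+1) * Real.cos u ^ (2*m+1))) (by norm_num : (2:ℝ) ≠ 0)]
  norm_num
  rw [integral_sin_pow_mul_cos_pow_odd (2*p+1) m]
  rw [Real.sin_zero, Real.sin_pi_div_two]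
  have sub2 : (∫ u in (0:ℝ)..1, u^(2*p+1) * (1 - u^2)^m)
      = ∫ t in (0:ℝ)..1, (1/2:ℝ) * (t^p * (1-t)^m) := by
    have hf : ∀ u ∈ Set.uIcc (0:ℝ) 1, HasDerivAt (fun u : ℝ => u^2) (2*u) u := by
      intro u _
      simpa using (hasDerivAt_pow 2 u)
    have := intervalIntegral.integral_comp_mul_deriv hf
      (by fun_prop : Continuous fun u : ℝ => 2*u).continuousOn
      (by fun_prop : Continuous fun t : ℝ => (1/2) * (t^p * (1-t)^m))
    norm_num only at this
    rw [← this]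
    congr 1; funext u
    show u^(2*p+1) * (1 - u^2)^m = 1/2 * ((u^2)^p * (1-u^2)^m) * (2*u)
    rw [← pow_mul]
    ring
  rw [sub2, intervalIntegral.integral_const_mul, beta_nat' m p]
  ring

def Fent (N p q : ℕ) : ℝ → ℂ := fun θ =>
  ((Real.sin θ * (Real.cos (θ/2)^((N-p)+(N-q)) * Real.sin (θ/2)^(p+q)) : ℝ) : ℂ)

def Gent (p q : ℕ) : ℝ → ℂ := fun φ =>
  Complex.exp ((((p : ℤ) - (q : ℤ) : ℤ) : ℂ) * Complex.I * (φ : ℂ))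

lemma key_pointwise (N : ℕ) (i j : Fin N → Fin 2) {a : ℝ × ℝ}
    (h1 : a.1 ∈ Set.Ioo 0 Real.pi) (h2 : a.2 ∈ Set.Ioc (-Real.pi) Real.pi) :
    (Real.toNNReal (Real.sin a.1)) •
      ((1:ℂ) * csN N ⟨sphCoord a, sphCoord_mem a⟩ i
        * (starRingEnd ℂ) (csN N ⟨sphCoord a, sphCoord_mem a⟩ j))
    = Fent N (wt i) (wt j) a.1 * Gent (wt i) (wt j) a.2 := by
  have hθ : thetaOf ⟨sphCoord a, sphCoord_mem a⟩ = a.1 :=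
    theta_sph ⟨h1.1.le, h1.2.le⟩
  have hφ : phiOf ⟨sphCoord a, sphCoord_mem a⟩ = a.2 := phi_sph h1 h2
  rw [csN_eval N _ i, csN_eval N _ j, hθ, hφ, NNReal.smul_def,
    Real.coe_toNNReal _ (Real.sin_nonneg_of_nonneg_of_le_pi h1.1.le h1.2.le),
    Complex.real_smul]
  have hconj : (starRingEnd ℂ) (Complex.exp (Complex.I * (a.2:ℂ)))
      = Complex.exp (-(Complex.I * (a.2:ℂ))) := by
    rw [← Complex.exp_conj]
    congr 1
    simp [Complex.conj_ofReal]
  simp only [map_mul, map_pow, Complex.conj_ofReal, hconj, one_mul]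
  have hee : Complex.exp (Complex.I * (a.2:ℂ)) ^ (wt i)
      * Complex.exp (-(Complex.I * (a.2:ℂ))) ^ (wt j) = Gent (wt i) (wt j) a.2 := by
    rw [← Complex.exp_nat_mul, ← Complex.exp_nat_mul, ← Complex.exp_add]
    unfold Gent
    congr 1
    push_cast
    ring
  rw [show ((Real.sin a.1 : ℝ) : ℂ) *
      (Complex.exp (Complex.I * (a.2:ℂ)) ^ (wt i)
        * ((Real.sin (a.1 / 2) : ℝ) : ℂ) ^ (wt i)
        * ((Real.cos (a.1 / 2) : ℝ) : ℂ) ^ (N - wt i)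
      * (Complex.exp (-(Complex.I * (a.2:ℂ))) ^ (wt j)
        * ((Real.sin (a.1 / 2) : ℝ) : ℂ) ^ (wt j)
        * ((Real.cos (a.1 / 2) : ℝ) : ℂ) ^ (N - wt j)))
    = (((Real.sin a.1 : ℝ) : ℂ)
        * (((Real.cos (a.1/2) : ℝ) : ℂ) ^ ((N - wt i) + (N - wt j))
          * ((Real.sin (a.1/2) : ℝ) : ℂ) ^ (wt i + wt j)))
      * (Complex.exp (Complex.I * (a.2:ℂ)) ^ (wt i)
        * Complex.exp (-(Complex.I * (a.2:ℂ))) ^ (wt j)) by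
    rw [pow_add, pow_add]; ring]
  rw [hee]
  unfold Fent
  push_cast
  ring

lemma Gent_integral (p q : ℕ) :
    ∫ φ in Set.Ioc (-Real.pi) Real.pi, Gent p q φ
      = if p = q then (2 * Real.pi : ℂ) else 0 := by
  rw [← intervalIntegral.integral_of_le (by linarith [Real.pi_pos] : -Real.pi ≤ Real.pi)]
  unfold Gent
  rw [phi_int ((p:ℤ) - (q:ℤ))]
  by_cases h : p = q
  · rw [if_pos (by omega : (p:ℤ) - (q:ℤ) = 0), if_pos h]
  · rw [if_neg (by omega : ¬ (p:ℤ) - (q:ℤ) = 0), if_neg h]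

lemma Fent_integral (N p : ℕ) (hp : p ≤ N) :
    ∫ θ in Set.Ioo (0:ℝ) Real.pi, Fent N p p θ
      = ((2 * ((p.factorial * (N-p).factorial : ℝ) / ((N+1).factorial)) : ℝ) : ℂ) := by
  rw [← MeasureTheory.integral_Ioc_eq_integral_Ioo,
    ← intervalIntegral.integral_of_le Real.pi_pos.le]
  unfold Fent
  rw [intervalIntegral.integral_ofReal]
  congr 1
  have he1 : (N - p) + (N - p) = 2 * (N - p) := by ring
  have he2 : p + p = 2 * p := by ring
  simp only [he1, he2]
  have hsum : p + (N - p) + 1 = N + 1 := by omega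
  rw [theta_int p (N - p), hsum]

/-- key matrix entry computation -/
lemma entry_comp (N : ℕ) (i j : Fin N → Fin 2) :
    Q'mat N (fun _ => 1) i j
      = if wt i = wt j
        then (((wt i).factorial * (N - wt i).factorial : ℂ) / (N.factorial : ℂ))
        else 0 := by
  classical
  have hpN := wt_le i
  have h0 : Q'mat N (fun _ => 1) i j
      = ((N + 1 : ℂ) / (4 * (Real.pi : ℂ))) *
        ∫ Ω, (1:ℂ) * csN N Ω i * (starRingEnd ℂ) (csN N Ω j) ∂μS2 := rfl
  have hgmeas : Measurable fun Ω : S2 =>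
      (1:ℂ) * csN N Ω i * (starRingEnd ℂ) (csN N Ω j) :=
    (measurable_const.mul (meas_csN N i)).mul
      (continuous_star.measurable.comp (meas_csN N j))
  have hTmeas : Measurable fun a : ℝ × ℝ => (⟨sphCoord a, sphCoord_mem a⟩ : S2) := by
    apply Continuous.measurable
    apply Continuous.subtype_mk
    apply (PiLp.continuous_toLp 2 _).comp
    apply continuous_pi
    intro k
    fin_cases k <;> simp only [sphCoord] <;> simp <;> fun_prop
  have hρmeas : Measurable fun a : ℝ × ℝ => Real.toNNReal (Real.sin a.1) :=
    continuous_real_toNNReal.measurable.comp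
      (Real.continuous_sin.measurable.comp measurable_fst)
  have step1 : (∫ Ω, (1:ℂ) * csN N Ω i * (starRingEnd ℂ) (csN N Ω j) ∂μS2)
      = ∫ a in (Set.Icc (0:ℝ) Real.pi ×ˢ Set.Ioc (-Real.pi) Real.pi),
          Real.toNNReal (Real.sin a.1) •
            ((1:ℂ) * csN N ⟨sphCoord a, sphCoord_mem a⟩ i
              * (starRingEnd ℂ) (csN N ⟨sphCoord a, sphCoord_mem a⟩ j)) := by
    unfold μS2
    rw [MeasureTheory.integral_map hTmeas.aemeasurable hgmeas.aestronglyMeasurable]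
    rw [show (fun a : ℝ×ℝ => ENNReal.ofReal (Real.sin a.1))
        = (fun a : ℝ×ℝ => ((Real.toNNReal (Real.sin a.1) : NNReal) : ENNReal)) from rfl]
    rw [integral_withDensity_eq_integral_smul hρmeas]
  have haeeq : (Set.Icc (0:ℝ) Real.pi ×ˢ Set.Ioc (-Real.pi) Real.pi : Set (ℝ×ℝ))
      =ᵐ[volume] (Set.Ioo (0:ℝ) Real.pi ×ˢ Set.Ioc (-Real.pi) Real.pi : Set (ℝ×ℝ)) := by
    rw [MeasureTheory.ae_eq_set]
    constructor
    · apply measure_mono_null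
        (t := ({0, Real.pi} : Set ℝ) ×ˢ (Set.univ : Set ℝ))
      · rintro ⟨x, y⟩ ⟨hmem, hnot⟩
        simp only [Set.mem_prod, Set.mem_Icc, Set.mem_Ioo] at *
        refine ⟨?_, trivial⟩
        simp only [Set.mem_insert_iff, Set.mem_singleton_iff]
        by_contra hc
        push_neg at hc
        exact hnot ⟨⟨lt_of_le_of_ne hmem.1.1 (Ne.symm hc.1),
          lt_of_le_of_ne hmem.1.2 hc.2⟩, hmem.2⟩
      · rw [show (volume : Measure (ℝ×ℝ)) = (volume : Measure ℝ).prod volume from rfl,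
          Measure.prod_prod]
        have hz : (volume : Measure ℝ) ({0, Real.pi} : Set ℝ) = 0 :=
          Set.Finite.measure_zero (Set.toFinite _) _
        rw [hz, zero_mul]
    · rw [Set.diff_eq_empty.mpr (Set.prod_mono Set.Ioo_subset_Icc_self subset_rfl)]
      exact measure_empty
  have step2 : (∫ a in (Set.Icc (0:ℝ) Real.pi ×ˢ Set.Ioc (-Real.pi) Real.pi),
          Real.toNNReal (Real.sin a.1) •
            ((1:ℂ) * csN N ⟨sphCoord a, sphCoord_mem a⟩ i
              * (starRingEnd ℂ) (csN N ⟨sphCoord a, sphCoord_mem a⟩ j)))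
      = ∫ a in (Set.Ioo (0:ℝ) Real.pi ×ˢ Set.Ioc (-Real.pi) Real.pi),
          Fent N (wt i) (wt j) a.1 * Gent (wt i) (wt j) a.2 := by
    rw [MeasureTheory.setIntegral_congr_set haeeq]
    apply MeasureTheory.setIntegral_congr_fun (measurableSet_Ioo.prod measurableSet_Ioc)
    rintro ⟨x, y⟩ hmem
    exact key_pointwise N i j hmem.1 hmem.2
  have step3 : (∫ a in (Set.Ioo (0:ℝ) Real.pi ×ˢ Set.Ioc (-Real.pi) Real.pi),
          Fent N (wt i) (wt j) a.1 * Gent (wt i) (wt j) a.2)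
      = (∫ θ in Set.Ioo (0:ℝ) Real.pi, Fent N (wt i) (wt j) θ)
        * (∫ φ in Set.Ioc (-Real.pi) Real.pi, Gent (wt i) (wt j) φ) := by
    rw [show (volume : Measure (ℝ×ℝ)) = (volume : Measure ℝ).prod volume from rfl]
    exact MeasureTheory.setIntegral_prod_mul _ _ _ _
  rw [h0, step1, step2, step3, Gent_integral]
  by_cases hpq : wt i = wt j
  · rw [if_pos hpq, if_pos hpq, ← hpq, Fent_integral N (wt i) hpN]
    have hπ : (Real.pi : ℂ) ≠ 0 := by exact_mod_cast Real.pi_ne_zero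
    have hNf : ((N.factorial : ℕ) : ℂ) ≠ 0 := by
      exact_mod_cast Nat.factorial_ne_zero N
    have hN1 : ((N : ℂ) + 1) ≠ 0 := by
      intro hcon
      have : ((N : ℂ) + 1) = ((N + 1 : ℕ) : ℂ) := by push_cast; ring
      rw [this] at hcon
      exact (Nat.cast_ne_zero (R := ℂ)).mpr (Nat.succ_ne_zero N) hcon
    push_cast [Nat.factorial_succ]
    field_simp
    ring
  · rw [if_neg hpq, if_neg hpq, mul_zero, mul_zero]

lemma mulVec_eq {N : ℕ} (v : SymSub N) :
    (Q'mat N (fun _ => 1)).mulVec (v : EuclideanSpace ℂ (Fin N → Fin 2))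
      = (v : EuclideanSpace ℂ (Fin N → Fin 2)) := by
  classical
  funext i
  have hv := v.2
  show ∑ j, Q'mat N (fun _ => 1) i j * (v : EuclideanSpace ℂ (Fin N → Fin 2)) j = _
  have h1 : ∀ j, Q'mat N (fun _ => 1) i j * (v : EuclideanSpace ℂ (Fin N → Fin 2)) j
      = if wt j = wt i then
          (((wt i).factorial * (N - wt i).factorial : ℂ) / (N.factorial : ℂ))
            * (v : EuclideanSpace ℂ (Fin N → Fin 2)) i
        else 0 := by
    intro j
    rw [entry_comp]
    by_cases h : wt j = wt i
    · rw [if_pos h.symm, if_pos h]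
      congr 1
      exact sym_const hv h.symm
    · rw [if_neg (fun hh => h hh.symm), if_neg h, zero_mul]
  simp only [h1]
  rw [Finset.sum_ite, Finset.sum_const_zero, add_zero, Finset.sum_const,
    wt_card N (wt i), nsmul_eq_mul]
  have hle := wt_le i
  have hfact : ((N.choose (wt i) : ℂ)) * (((wt i).factorial * (N - wt i).factorial : ℂ))
      = (N.factorial : ℂ) := by
    have := Nat.choose_mul_factorial_mul_factorial hle
    push_cast [← this]
    ring
  have hN : (N.factorial : ℂ) ≠ 0 := by
    exact_mod_cast Nat.cast_ne_zero.mpr (Nat.factorial_ne_zero N)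
  field_simp
  linear_combination ((v : EuclideanSpace ℂ (Fin N → Fin 2)) i) * hfact

/-- resolution of the identity: for every `N`,
`((N+1)/(4π)) ∫_{S²} |Ω⟩⟨Ω|_N dΩ` is the identity on `Sym^N(ℂ²)`. -/
theorem coherent_states_resolution_of_identity (N : ℕ) :
    Q' N (fun _ => 1) = ContinuousLinearMap.id ℂ (SymSub N) := by
  apply ContinuousLinearMap.ext
  intro v
  have h0 : (Q' N fun _ => 1) v
      = symProj N (Matrix.toEuclideanLin (Q'mat N fun _ => 1) ((SymSub N).subtype v)) := rfl
  have h1 : Matrix.toEuclideanLin (Q'mat N fun _ => 1) ((SymSub N).subtype v)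
      = ((SymSub N).subtype v) := by
    rw [Matrix.toEuclideanLin_apply]
    exact congrArg (WithLp.toLp 2) (mulVec_eq v)
  have h2 : symProj N ((SymSub N).subtype v) = v := by
    apply Subtype.ext
    apply WithLp.ofLp_injective
    funext i
    show (N.factorial : ℂ)⁻¹ * ∑ σ : Equiv.Perm (Fin N),
      ((SymSub N).subtype v) (i ∘ σ) = ((SymSub N).subtype v) i
    have hterm : ∀ σ : Equiv.Perm (Fin N),
        ((SymSub N).subtype v) (i ∘ σ) = ((SymSub N).subtype v) i := fun σ => v.2 σ i
    rw [Finset.sum_congr rfl (fun σ _ => hterm σ), Finset.sum_const, Finset.card_univ,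
      Fintype.card_perm, nsmul_eq_mul]
    rw [Fintype.card_fin, ← mul_assoc,
      inv_mul_cancel₀ (by exact_mod_cast Nat.factorial_ne_zero N : (N.factorial : ℂ) ≠ 0),
      one_mul]
  rw [h0, h1, h2]
  rfl

end
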